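/- If S is a set of positive integers with 1 ∈ S and 2 ∈ S, then the density of exponentially S-numbers is at least ∏_p (1 − 1/p³); if instead 1 ∈ S and 2 ∉ S, the density is at most ∏_p (1 − (p−1)/p³). Consequently, no density value of an exponentially S-number set (over S containing 1) lies in the open interval (∏_p (1 − (p−1)/p³), ∏_p (1 − 1/p³)). -/

import Mathlib

def IsExpSNumber (S : Set ℕ) (N : ℕ) : Prop :=
  0 < N ∧ ∀ p : ℕ, p.Prime → p ∣ N → N.factorization p ∈ S

def HasDensity (A : Set ℕ) (d : ℝ) : Prop :=
  Filter.Tendsto (fun N : ℕ => ({n : ℕ | n ∈ A ∧ n ≤ N}.ncard : ℝ) / N)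
    Filter.atTop (nhds d)


open Finset Filter Topology

namespace ExpSAux

lemma per_iter {q : ℕ → Prop} {M : ℕ} (hq : ∀ n, q (n + M) ↔ q n) :
    ∀ (k n : ℕ), q (n + M * k) ↔ q n := by
  intro k
  induction k with
  | zero => simp
  | succ k ih => intro n; rw [Nat.mul_succ, ← add_assoc, hq, ih]

lemma per_mod {q : ℕ → Prop} {M : ℕ} (hM : 0 < M) (hq : ∀ n, q (n + M) ↔ q n) (n : ℕ) :
    q (n % M) ↔ q n := by
  conv_rhs => rw [← Nat.mod_add_div n M]
  rw [per_iter hq]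

lemma per_of_dvd {q : ℕ → Prop} {m M : ℕ} (hd : m ∣ M) (hq : ∀ n, q (n + m) ↔ q n) (n : ℕ) :
    q (n + M) ↔ q n := by
  obtain ⟨t, rfl⟩ := hd
  exact per_iter hq t n

lemma card_filter_range_mul {q : ℕ → Prop} [DecidablePred q] {M : ℕ}
    (hq : ∀ n, q (n + M) ↔ q n) (k : ℕ) :
    #((range (M * k)).filter q) = k * #((range M).filter q) := by
  induction k with
  | zero => simp
  | succ k ih =>
    rw [Nat.mul_succ, range_add, filter_union, filter_map,
        card_union_of_disjoint, ih, card_map]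
    · have he : (range M).filter (q ∘ (addLeftEmbedding (M * k)))
          = (range M).filter q := by
        apply filter_congr
        intro x _
        simp only [Function.comp, addLeftEmbedding_apply]
        rw [add_comm (M * k) x, per_iter hq]
      rw [he]; ring
    · rw [disjoint_left]
      intro a ha hb
      have h1 : a < M * k := mem_range.mp (mem_of_mem_filter a ha)
      obtain ⟨x, -, hx⟩ := mem_map.mp hb
      have hx' : M * k + x = a := hx
      omega

lemma card_filter_and {a b : ℕ} (ha : a ≠ 0) (hb : b ≠ 0) (hab : Nat.Coprime a b)
    {q1 q2 : ℕ → Prop} [DecidablePred q1] [DecidablePred q2]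
    (h1 : ∀ n, q1 (n + a) ↔ q1 n) (h2 : ∀ n, q2 (n + b) ↔ q2 n) :
    #((range (a * b)).filter fun n => q1 n ∧ q2 n)
      = #((range a).filter q1) * #((range b).filter q2) := by
  rw [← card_product]
  apply card_bij' (i := fun n _ => (n % a, n % b))
    (j := fun p _ => (Nat.chineseRemainder hab p.1 p.2 : ℕ))
  · intro n hn
    have hmem := mem_filter.mp hn
    have hq1 := hmem.2.1
    have hq2 := hmem.2.2
    refine mem_product.mpr ⟨mem_filter.mpr ⟨mem_range.mpr ?_, ?_⟩,
      mem_filter.mpr ⟨mem_range.mpr ?_, ?_⟩⟩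
    · exact Nat.mod_lt _ (Nat.pos_of_ne_zero ha)
    · exact (per_mod (Nat.pos_of_ne_zero ha) h1 n).mpr hq1
    · exact Nat.mod_lt _ (Nat.pos_of_ne_zero hb)
    · exact (per_mod (Nat.pos_of_ne_zero hb) h2 n).mpr hq2
  · intro p hp
    obtain ⟨hp1, hp2⟩ := mem_product.mp hp
    have hx := mem_filter.mp hp1
    have hy := mem_filter.mp hp2
    set k := (Nat.chineseRemainder hab p.1 p.2 : ℕ) with hk
    have hk1 : k ≡ p.1 [MOD a] := (Nat.chineseRemainder hab p.1 p.2).2.1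
    have hk2 : k ≡ p.2 [MOD b] := (Nat.chineseRemainder hab p.1 p.2).2.2
    have hka : k % a = p.1 := by
      have h := hk1; unfold Nat.ModEq at h
      exact h.trans (Nat.mod_eq_of_lt (mem_range.mp hx.1))
    have hkb : k % b = p.2 := by
      have h := hk2; unfold Nat.ModEq at h
      exact h.trans (Nat.mod_eq_of_lt (mem_range.mp hy.1))
    refine mem_filter.mpr ⟨mem_range.mpr ?_, ?_, ?_⟩
    · exact Nat.chineseRemainder_lt_mul hab p.1 p.2 ha hb
    · rw [← per_mod (Nat.pos_of_ne_zero ha) h1 k, hka]; exact hx.2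
    · rw [← per_mod (Nat.pos_of_ne_zero hb) h2 k, hkb]; exact hy.2
  · intro n hn
    have hlt : n < a * b := mem_range.mp (mem_of_mem_filter n hn)
    have h1' : n ≡ n % a [MOD a] := (Nat.mod_modEq n a).symm
    have h2' : n ≡ n % b [MOD b] := (Nat.mod_modEq n b).symm
    have := Nat.chineseRemainder_modEq_unique hab h1' h2'
    unfold Nat.ModEq at this
    rw [Nat.mod_eq_of_lt hlt, Nat.mod_eq_of_lt
      (Nat.chineseRemainder_lt_mul hab _ _ ha hb)] at this
    exact this.symm
  · intro p hp
    obtain ⟨hp1, hp2⟩ := mem_product.mp hp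
    have hka : (Nat.chineseRemainder hab p.1 p.2 : ℕ) % a = p.1 := by
      have h := (Nat.chineseRemainder hab p.1 p.2).2.1
      unfold Nat.ModEq at h
      exact h.trans (Nat.mod_eq_of_lt (mem_range.mp (mem_filter.mp hp1).1))
    have hkb : (Nat.chineseRemainder hab p.1 p.2 : ℕ) % b = p.2 := by
      have h := (Nat.chineseRemainder hab p.1 p.2).2.2
      unfold Nat.ModEq at h
      exact h.trans (Nat.mod_eq_of_lt (mem_range.mp (mem_filter.mp hp2).1))
    exact Prod.ext hka hkb


lemma card_filter_forall {F : Finset ℕ} (hF : ∀ p ∈ F, p.Prime)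
    (bad : ℕ → ℕ → Prop) [∀ p, DecidablePred (bad p)]
    (hper : ∀ p n, bad p (n + p ^ 3) ↔ bad p n) :
    #((range (∏ p ∈ F, p ^ 3)).filter fun n => ∀ p ∈ F, ¬ bad p n)
      = ∏ p ∈ F, #((range (p ^ 3)).filter fun n => ¬ bad p n) := by
  classical
  induction F using Finset.induction_on with
  | empty => simp
  | @insert a F ha ih =>
    have hap : a.Prime := hF a (mem_insert_self a F)
    have hF' : ∀ p ∈ F, p.Prime := fun p hp => hF p (mem_insert_of_mem hp)
    have hprodne : (∏ p ∈ F, p ^ 3) ≠ 0 :=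
      Finset.prod_ne_zero_iff.mpr fun p hp => pow_ne_zero 3 (hF' p hp).ne_zero
    have hco : Nat.Coprime (a ^ 3) (∏ p ∈ F, p ^ 3) := by
      apply Nat.Coprime.prod_right
      intro p hp
      exact Nat.Coprime.pow _ _
        ((Nat.coprime_primes hap (hF' p hp)).mpr (fun h => ha (h ▸ hp)))
    have hpred : ((range ((a^3) * ∏ p ∈ F, p ^ 3)).filter
          fun n => ∀ p ∈ insert a F, ¬ bad p n)
        = (range ((a^3) * ∏ p ∈ F, p ^ 3)).filter
          fun n => (¬ bad a n) ∧ ∀ p ∈ F, ¬ bad p n := by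
      apply filter_congr
      intro x _
      simp [Finset.forall_mem_insert]
    rw [Finset.prod_insert ha, Finset.prod_insert ha, hpred,
        card_filter_and (pow_ne_zero 3 hap.ne_zero) hprodne hco
          (fun n => (hper a n).not)
          (fun n => ?_), ih hF']
    constructor
    · intro h p hp
      have := h p hp
      rwa [per_of_dvd (Finset.dvd_prod_of_mem (fun p => p ^ 3) hp) (hper p) n] at this
    · intro h p hp
      rw [per_of_dvd (Finset.dvd_prod_of_mem (fun p => p ^ 3) hp) (hper p) n]
      exact h p hp

lemma filter_dvd_range (m : ℕ) (hm : 0 < m) [DecidablePred (m ∣ ·)] :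
    (range m).filter (m ∣ ·) = {0} := by
  ext n
  simp only [mem_filter, mem_range, mem_singleton]
  constructor
  · rintro ⟨hlt, hdvd⟩; exact Nat.eq_zero_of_dvd_of_lt hdvd hlt
  · rintro rfl; exact ⟨hm, dvd_zero m⟩

lemma card_not_dvd {m : ℕ} (hm : 0 < m) [DecidablePred (m ∣ ·)] :
    #((range m).filter fun n => ¬ m ∣ n) = m - 1 := by
  classical
  rw [filter_not, card_sdiff_of_subset (filter_subset _ _), card_range]
  have h := filter_dvd_range m hm
  rw [show (range m).filter (fun n => m ∣ n) = (range m).filter (m ∣ ·) from by rfl]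
  rw [filter_dvd_range m hm]
  simp

lemma card_bad2 {p : ℕ} (hp : p.Prime) :
    #((range (p^3)).filter fun n => p^2 ∣ n ∧ ¬ p^3 ∣ n) = p - 1 := by
  classical
  have himg : (range (p^3)).filter (fun n => p^2 ∣ n ∧ ¬ p^3 ∣ n)
      = ((range p).filter fun k => ¬ p ∣ k).image (fun k => p^2 * k) := by
    ext n
    simp only [mem_filter, mem_range, mem_image]
    constructor
    · rintro ⟨hlt, ⟨k, rfl⟩, hnd⟩
      refine ⟨k, ⟨?_, fun hdk => hnd ?_⟩, rfl⟩
      · have h3 : p^3 = p^2 * p := by ring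
        rw [h3] at hlt
        exact lt_of_mul_lt_mul_left hlt (Nat.zero_le _)
      · obtain ⟨t, rfl⟩ := hdk
        exact ⟨t, by ring⟩
    · rintro ⟨k, ⟨hk, hndk⟩, rfl⟩
      have hp2 : (p:ℕ)^2 ≠ 0 := pow_ne_zero 2 hp.ne_zero
      refine ⟨?_, ⟨k, rfl⟩, fun hdvd => hndk ?_⟩
      · have h3 : p^3 = p^2 * p := by ring
        rw [h3]
        exact (Nat.mul_lt_mul_left (Nat.pos_of_ne_zero hp2)).mpr hk
      · have h3 : p^3 = p^2 * p := by ring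
        rw [h3] at hdvd
        exact (mul_dvd_mul_iff_left hp2).mp hdvd
  rw [himg, card_image_of_injective _ (mul_right_injective₀ (pow_ne_zero 2 hp.ne_zero)),
      card_not_dvd hp.pos]

lemma card_good2 {p : ℕ} (hp : p.Prime) :
    #((range (p^3)).filter fun n => ¬ (p^2 ∣ n ∧ ¬ p^3 ∣ n)) = p^3 - (p - 1) := by
  classical
  rw [filter_not, card_sdiff_of_subset (filter_subset _ _), card_range, card_bad2 hp]

lemma card_good1 {p : ℕ} (hp : p.Prime) :
    #((range (p^3)).filter fun n => ¬ p^3 ∣ n) = p^3 - 1 :=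
  card_not_dvd (pow_pos hp.pos 3)


lemma cast_le_mul_div {a b : ℕ} (hb : 0 < b) : (a : ℝ) ≤ b * ↑(a / b) + b := by
  have h1 : a < b * (a / b) + b := by
    have h2 := Nat.div_add_mod a b
    have h3 := Nat.mod_lt a hb
    omega
  exact_mod_cast h1.le

lemma multipliable_aux {f : Nat.Primes → ℝ} (h0 : ∀ p, 0 ≤ f p) (h1 : ∀ p, f p ≤ 1) :
    Multipliable f := by
  refine ⟨⨅ F : Finset Nat.Primes, ∏ p ∈ F, f p, ?_⟩
  have anti : Antitone (fun F : Finset Nat.Primes => ∏ p ∈ F, f p) := by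
    intro s t hst
    dsimp only
    rw [← Finset.prod_sdiff hst]
    exact mul_le_of_le_one_left (Finset.prod_nonneg fun i _ => h0 i)
      (Finset.prod_le_one (fun i _ => h0 i) (fun i _ => h1 i))
  exact tendsto_atTop_ciInf anti ⟨0, fun x hx => by
    obtain ⟨F, rfl⟩ := hx
    exact Finset.prod_nonneg fun i _ => h0 i⟩

lemma summable_primes : Summable (fun p : Nat.Primes => 1/((p:ℕ):ℝ)^3) := by
  have h : Summable (fun n : ℕ => 1/(n:ℝ)^3) := by
    simpa using Real.summable_one_div_nat_pow.mpr (by norm_num : 1 < 3)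
  exact h.comp_injective Subtype.val_injective


lemma dens_card (A : Set ℕ) (N : ℕ) [DecidablePred (· ∈ A)] (h0 : (0:ℕ) ∉ A) :
    {n : ℕ | n ∈ A ∧ n ≤ N}.ncard = #((range (N+1)).filter (· ∈ A)) := by
  rw [show {n : ℕ | n ∈ A ∧ n ≤ N} = ↑((range (N+1)).filter (· ∈ A)) from ?_,
      Set.ncard_coe_finset]
  ext n
  simp only [Set.mem_setOf_eq, coe_filter, mem_range, Nat.lt_succ_iff]
  tauto

set_option maxHeartbeats 1000000 in
lemma key1 (S : Set ℕ) (h1 : 1 ∈ S) (h2 : 2 ∈ S) (d : ℝ)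
    (hD : HasDensity {N | IsExpSNumber S N} d) (F : Finset Nat.Primes) :
    (∏ p ∈ F, (1 - 1/((p:ℕ):ℝ)^3))
      - (∑' p : {x : Nat.Primes // x ∉ F}, 1/(((p:Nat.Primes):ℕ):ℝ)^3) ≤ d := by
  classical
  set A := {n : ℕ | IsExpSNumber S n} with hA
  set F' : Finset ℕ := F.image Subtype.val with hF'def
  have hF' : ∀ p ∈ F', p.Prime := by
    intro p hp; obtain ⟨q, _, rfl⟩ := mem_image.mp hp; exact q.2
  set M : ℕ := ∏ p ∈ F', p^3 with hMdef
  set c : ℕ := ∏ p ∈ F', (p^3 - 1) with hcdef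
  have hM : 0 < M := prod_pos (fun p hp => pow_pos (hF' p hp).pos 3)
  set good : ℕ → Prop := fun n => ∀ p ∈ F', ¬ p^3 ∣ n with hgood
  have hgoodM : ∀ n, good (n + M) ↔ good n := by
    intro n
    have hiff : ∀ p ∈ F', ((p^3 ∣ (n + M)) ↔ p^3 ∣ n) := fun p hp =>
      per_of_dvd (dvd_prod_of_mem (fun p => p^3) hp)
        (fun m => Nat.dvd_add_self_right) n
    constructor
    · intro h p hp hd
      exact h p hp ((hiff p hp).mpr hd)
    · intro h p hp hd
      exact h p hp ((hiff p hp).mp hd)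
  have hcount : #((range M).filter good) = c := by
    rw [hcdef]
    refine Eq.trans ?_ (prod_congr rfl fun p hp => card_good1 (hF' p hp))
    exact card_filter_forall hF' (fun p n => p^3 ∣ n)
      (fun p n => Nat.dvd_add_self_right)
  have hlow : ∀ N : ℕ, (N / M) * c ≤ #((range N).filter good) := by
    intro N
    have h1' := card_filter_range_mul hgoodM (N / M)
    rw [hcount] at h1'
    rw [← h1']
    exact card_le_card (filter_subset_filter _
      (by exact range_subset_range.mpr (Nat.mul_div_le N M)))
  have hsub : ∀ N : ℕ, (range (N+1)).filter good ⊆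
      ((range (N+1)).filter (· ∈ A)) ∪ ({0} ∪ ((N+1).primesBelow \ F').biUnion
        (fun q => (range (N+1)).filter fun k => k ≠ 0 ∧ q^3 ∣ k)) := by
    intro N n hn
    have hnN : n < N + 1 := mem_range.mp (mem_of_mem_filter _ hn)
    have hgoodn : good n := (mem_filter.mp hn).2
    by_cases hn0 : n = 0
    · subst hn0
      exact mem_union_right _ (mem_union_left _ (mem_singleton_self 0))
    by_cases hbad : ∃ q : ℕ, q.Prime ∧ q ∉ F' ∧ q^3 ∣ n
    · obtain ⟨q, hqp, hqF, hqd⟩ := hbad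
      apply mem_union_right
      apply mem_union_right
      apply mem_biUnion.mpr
      refine ⟨q, ?_, mem_filter.mpr ⟨mem_range.mpr hnN, hn0, hqd⟩⟩
      refine mem_sdiff.mpr ⟨Nat.mem_primesBelow.mpr ⟨?_, hqp⟩, hqF⟩
      have hle : q^3 ≤ n := Nat.le_of_dvd (Nat.pos_of_ne_zero hn0) hqd
      have hle2 : q ≤ q^3 := Nat.le_self_pow (by norm_num) q
      omega
    · apply mem_union_left
      refine mem_filter.mpr ⟨mem_range.mpr hnN, ?_⟩
      refine ⟨Nat.pos_of_ne_zero hn0, fun p hp hpd => ?_⟩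
      have hple : 1 ≤ n.factorization p :=
        (Nat.Prime.factorization_pos_of_dvd hp hn0 hpd)
      have hub : ¬ (3 ≤ n.factorization p) := by
        intro h3
        have hdvd3 : p^3 ∣ n :=
          (Nat.Prime.pow_dvd_iff_le_factorization hp hn0).mpr h3
        by_cases hpF : p ∈ F'
        · exact hgoodn p hpF hdvd3
        · exact hbad ⟨p, hp, hpF, hdvd3⟩
      have : n.factorization p = 1 ∨ n.factorization p = 2 := by omega
      rcases this with h | h <;> rw [h] <;> assumption
  have hcard : ∀ N : ℕ, #((range (N+1)).filter good)
      ≤ #((range (N+1)).filter (· ∈ A))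
        + (1 + ∑ q ∈ (N+1).primesBelow \ F', N / q^3) := by
    intro N
    refine (card_le_card (hsub N)).trans ((card_union_le _ _).trans ?_)
    apply Nat.add_le_add_left
    refine (card_union_le _ _).trans ?_
    simp only [card_singleton]
    apply Nat.add_le_add_left
    refine (card_biUnion_le).trans ?_
    apply Finset.sum_le_sum
    intro q hq
    exact le_of_eq (Nat.card_multiples' N (q^3))
  -- real quantities
  set QF : ℝ := ∏ p ∈ F', (1 - 1/(p:ℝ)^3) with hQdef
  have hMR : (0:ℝ) < (M:ℝ) := by exact_mod_cast hM
  have hQeq : (c:ℝ) = QF * M := by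
    rw [hcdef, hMdef, hQdef, Nat.cast_prod, Nat.cast_prod, ← Finset.prod_mul_distrib]
    apply prod_congr rfl
    intro p hp
    have hp0 : (0:ℝ) < (p:ℝ) := by exact_mod_cast (hF' p hp).pos
    have hp3 : (1:ℕ) ≤ p^3 := Nat.one_le_iff_ne_zero.mpr (pow_ne_zero 3 (hF' p hp).ne_zero)
    rw [Nat.cast_sub hp3]
    push_cast
    field_simp
  have hQ0 : 0 ≤ QF := by
    apply prod_nonneg
    intro p hp
    have hp1 : (1:ℝ) ≤ (p:ℝ) := by exact_mod_cast (hF' p hp).one_lt.le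
    have h3 : (1:ℝ) ≤ (p:ℝ)^3 := one_le_pow₀ hp1
    have hle : 1/(p:ℝ)^3 ≤ 1 := by rw [div_le_one (by linarith)]; exact h3
    linarith
  set tF : ℝ := ∑' p : {x : Nat.Primes // x ∉ F}, 1/(((p:Nat.Primes):ℕ):ℝ)^3 with htFdef
  have htF : ∀ N : ℕ, (∑ q ∈ (N+1).primesBelow \ F', ((N / q^3 : ℕ):ℝ)) ≤ N * tF := by
    intro N
    set B := (N+1).primesBelow \ F' with hBdef
    have hstep1 : ∀ q ∈ B, ((N / q^3 : ℕ):ℝ) ≤ (N:ℝ) * (1/(q:ℝ)^3) := by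
      intro q hq
      have h := Nat.cast_div_le (α := ℝ) (m := N) (n := q^3)
      rw [mul_one_div]
      refine h.trans (le_of_eq ?_)
      push_cast
      ring
    refine (Finset.sum_le_sum hstep1).trans ?_
    rw [← Finset.mul_sum]
    apply mul_le_mul_of_nonneg_left ?_ (Nat.cast_nonneg N)
    set T : Finset {x : Nat.Primes // x ∉ F} := B.attach.image
      (fun x => ⟨⟨x.1, Nat.prime_of_mem_primesBelow (mem_sdiff.mp x.2).1⟩,
        fun hmem => (mem_sdiff.mp x.2).2 (mem_image.mpr ⟨_, hmem, rfl⟩)⟩) with hTdef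
    have hsumT : ∑ t ∈ T, 1/(((t.1:Nat.Primes):ℕ):ℝ)^3 = ∑ q ∈ B, 1/(q:ℝ)^3 := by
      rw [hTdef, Finset.sum_image ?_]
      · exact Finset.sum_attach B (fun q => 1/(q:ℝ)^3)
      · intro x hx y hy h
        apply Subtype.ext
        exact congrArg (fun t : {x : Nat.Primes // x ∉ F} => ((t.1 : Nat.Primes):ℕ)) h
    rw [← hsumT, htFdef]
    exact Summable.sum_le_tsum T (fun _ _ => by positivity)
      (summable_primes.comp_injective Subtype.val_injective)
  have h0A : (0:ℕ) ∉ A := by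
    intro h
    rw [hA] at h
    exact absurd h.1 (lt_irrefl 0)
  have hDen : Tendsto (fun N : ℕ => (#((range (N+1)).filter (· ∈ A)) : ℝ)/(N:ℝ))
      atTop (𝓝 d) := by
    refine hD.congr ?_
    intro N
    rw [dens_card A N h0A]
  have hmain : ∀ N : ℕ, 1 ≤ N → QF - tF - ((c:ℝ)+1)/(N:ℝ)
      ≤ (#((range (N+1)).filter (· ∈ A)) : ℝ)/(N:ℝ) := by
    intro N hN
    have hNpos : (0:ℝ) < N := by exact_mod_cast hN
    have hN0 : (N:ℝ) ≠ 0 := ne_of_gt hNpos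
    rw [le_div_iff₀ hNpos]
    have hexp : (QF - tF - ((c:ℝ)+1)/(N:ℝ)) * N = N*QF - N*tF - ((c:ℝ)+1) := by
      field_simp
    rw [hexp]
    have hG : (((N+1)/M : ℕ) : ℝ) * (c:ℝ) ≤ (#((range (N+1)).filter good) : ℝ) := by
      exact_mod_cast hlow (N+1)
    have hcm : (N:ℝ)+1 ≤ M * ↑((N+1)/M) + M := by
      have h := cast_le_mul_div (a := N+1) (b := M) hM
      push_cast at h
      linarith
    have hG2 : ((N:ℝ)+1)*QF - c ≤ (#((range (N+1)).filter good) : ℝ) := by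
      have hc0 : (0:ℝ) ≤ c := Nat.cast_nonneg c
      have h1' : (((N:ℝ)+1) - M)/M ≤ ↑((N+1)/M) := by
        rw [div_le_iff₀ hMR]
        nlinarith [hcm]
      calc ((N:ℝ)+1)*QF - c = ((((N:ℝ)+1) - M)/M) * c := by
            rw [hQeq]; field_simp
        _ ≤ ↑((N+1)/M) * c := mul_le_mul_of_nonneg_right h1' hc0
        _ ≤ _ := hG
    have hcardR : (#((range (N+1)).filter good) : ℝ)
        ≤ (#((range (N+1)).filter (· ∈ A)) : ℝ)
          + (1 + ∑ q ∈ (N+1).primesBelow \ F', ((N / q^3:ℕ):ℝ)) := by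
      have h := hcard N
      push_cast
      exact_mod_cast h
    linarith [hG2, hcardR, htF N, hQ0]
  have hRHS : Tendsto (fun N : ℕ => QF - tF - ((c:ℝ)+1)/(N:ℝ)) atTop (𝓝 (QF - tF - 0)) :=
    tendsto_const_nhds.sub (Tendsto.div_atTop tendsto_const_nhds tendsto_natCast_atTop_atTop)
  have hfin := le_of_tendsto_of_tendsto hRHS hDen
    (eventually_atTop.mpr ⟨1, fun N hN => hmain N hN⟩)
  have hQimg : QF = ∏ p ∈ F, (1 - 1/((p:ℕ):ℝ)^3) := by
    rw [hQdef, hF'def]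
    exact Finset.prod_image (fun x _ y _ h => Subtype.ext h)
  rw [← hQimg]
  rw [htFdef] at hfin
  linarith [hfin]

set_option maxHeartbeats 1000000 in
lemma key2 (S : Set ℕ) (h2 : 2 ∉ S) (d : ℝ)
    (hD : HasDensity {N | IsExpSNumber S N} d) (F : Finset Nat.Primes) :
    d ≤ ∏ p ∈ F, (1 - (((p:ℕ):ℝ) - 1)/((p:ℕ):ℝ)^3) := by
  classical
  set A := {n : ℕ | IsExpSNumber S n} with hA
  set F' : Finset ℕ := F.image Subtype.val with hF'def
  have hF' : ∀ p ∈ F', p.Prime := by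
    intro p hp; obtain ⟨q, _, rfl⟩ := mem_image.mp hp; exact q.2
  set M : ℕ := ∏ p ∈ F', p^3 with hMdef
  set c : ℕ := ∏ p ∈ F', (p^3 - (p-1)) with hcdef
  have hM : 0 < M := prod_pos (fun p hp => pow_pos (hF' p hp).pos 3)
  set good : ℕ → Prop := fun n => ∀ p ∈ F', ¬ (p^2 ∣ n ∧ ¬ p^3 ∣ n) with hgood
  have hper : ∀ (p n : ℕ), ((p^2 ∣ (n + p^3) ∧ ¬ p^3 ∣ (n + p^3))
      ↔ (p^2 ∣ n ∧ ¬ p^3 ∣ n)) := by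
    intro p n
    have h2d : p^2 ∣ p^3 := pow_dvd_pow p (by norm_num)
    rw [Nat.dvd_add_self_right]
    apply and_congr _ Iff.rfl
    rw [add_comm]
    exact Nat.dvd_add_right h2d
  have hgoodM : ∀ n, good (n + M) ↔ good n := by
    intro n
    have hiff : ∀ p ∈ F', ((p^2 ∣ (n + M) ∧ ¬ p^3 ∣ (n + M)) ↔ (p^2 ∣ n ∧ ¬ p^3 ∣ n)) := by
      intro p hp
      have h := per_of_dvd (q := fun m => p^2 ∣ m ∧ ¬ p^3 ∣ m)
        (dvd_prod_of_mem (fun p => p^3) hp) (hper p) n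
      simpa using h
    constructor
    · intro h p hp hd
      exact h p hp ((hiff p hp).mpr hd)
    · intro h p hp hd
      exact h p hp ((hiff p hp).mp hd)
  have hcount : #((range M).filter good) = c := by
    rw [hcdef]
    refine Eq.trans ?_ (prod_congr rfl fun p hp => card_good2 (hF' p hp))
    exact card_filter_forall hF' (fun p n => p^2 ∣ n ∧ ¬ p^3 ∣ n) hper
  have hup : ∀ N : ℕ, #((range N).filter good) ≤ (N/M + 1) * c := by
    intro N
    have h1' := card_filter_range_mul hgoodM (N/M + 1)
    rw [hcount] at h1'
    rw [← h1']
    refine card_le_card (filter_subset_filter _ (range_subset_range.mpr ?_))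
    have hd := Nat.div_add_mod N M
    have hm := Nat.mod_lt N hM
    calc N = M * (N/M) + N % M := hd.symm
      _ ≤ M * (N/M) + M := by omega
      _ = M * (N/M + 1) := by ring
  have hsub : ∀ N : ℕ, ((range (N+1)).filter (· ∈ A)) ⊆ (range (N+1)).filter good := by
    intro N n hn
    have hnN := (mem_filter.mp hn).1
    have hnA : n ∈ A := (mem_filter.mp hn).2
    refine mem_filter.mpr ⟨hnN, ?_⟩
    rintro p hp ⟨h2d, h3d⟩
    rw [hA] at hnA
    obtain ⟨hn0, hfac⟩ := hnA
    have hpp := hF' p hp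
    have hpdvd : p ∣ n := dvd_trans (dvd_pow_self p two_ne_zero) h2d
    have hf2 : 2 ≤ n.factorization p :=
      (Nat.Prime.pow_dvd_iff_le_factorization hpp hn0.ne').mp h2d
    have hf3 : ¬ 3 ≤ n.factorization p := fun h =>
      h3d ((Nat.Prime.pow_dvd_iff_le_factorization hpp hn0.ne').mpr h)
    have hfeq : n.factorization p = 2 := by omega
    exact h2 (hfeq ▸ hfac p hpp hpdvd)
  set Q : ℝ := ∏ p ∈ F', (1 - ((p:ℝ)-1)/(p:ℝ)^3) with hQdef
  have hMR : (0:ℝ) < (M:ℝ) := by exact_mod_cast hM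
  have hQeq : (c:ℝ) = Q * M := by
    rw [hcdef, hMdef, hQdef, Nat.cast_prod, Nat.cast_prod, ← Finset.prod_mul_distrib]
    apply prod_congr rfl
    intro p hp
    have hp0 : (0:ℝ) < (p:ℝ) := by exact_mod_cast (hF' p hp).pos
    have hp1 : 1 ≤ p := (hF' p hp).pos
    have hple : p - 1 ≤ p^3 := le_trans (Nat.sub_le p 1) (Nat.le_self_pow (by norm_num) p)
    rw [Nat.cast_sub hple, Nat.cast_sub hp1]
    push_cast
    field_simp
  have hfac01 : ∀ p ∈ F', 0 ≤ 1 - ((p:ℝ)-1)/(p:ℝ)^3 ∧ 1 - ((p:ℝ)-1)/(p:ℝ)^3 ≤ 1 := by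
    intro p hp
    have hp1 : (1:ℝ) ≤ (p:ℝ) := by exact_mod_cast (hF' p hp).one_lt.le
    have h3 : (1:ℝ) ≤ (p:ℝ)^3 := one_le_pow₀ hp1
    have hnum0 : (0:ℝ) ≤ (p:ℝ) - 1 := by linarith
    have hp3 : (p:ℝ) ≤ (p:ℝ)^3 := le_self_pow₀ (by linarith) (by norm_num)
    have hnum1 : (p:ℝ) - 1 ≤ (p:ℝ)^3 := by linarith
    constructor
    · have : ((p:ℝ)-1)/(p:ℝ)^3 ≤ 1 := by
        rw [div_le_one (by linarith)]
        exact hnum1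
      linarith
    · have : 0 ≤ ((p:ℝ)-1)/(p:ℝ)^3 := div_nonneg hnum0 (by linarith)
      linarith
  have hQ0 : 0 ≤ Q := prod_nonneg fun p hp => (hfac01 p hp).1
  have hQ1 : Q ≤ 1 := prod_le_one (fun p hp => (hfac01 p hp).1) (fun p hp => (hfac01 p hp).2)
  have h0A : (0:ℕ) ∉ A := by
    intro h
    rw [hA] at h
    exact absurd h.1 (lt_irrefl 0)
  have hDen : Tendsto (fun N : ℕ => (#((range (N+1)).filter (· ∈ A)) : ℝ)/(N:ℝ))
      atTop (𝓝 d) := by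
    refine hD.congr ?_
    intro N
    rw [dens_card A N h0A]
  have hmain : ∀ N : ℕ, 1 ≤ N →
      (#((range (N+1)).filter (· ∈ A)) : ℝ)/(N:ℝ) ≤ Q + (1 + (c:ℝ))/(N:ℝ) := by
    intro N hN
    have hNpos : (0:ℝ) < N := by exact_mod_cast hN
    have hN0 : (N:ℝ) ≠ 0 := ne_of_gt hNpos
    rw [div_le_iff₀ hNpos]
    have hexp : (Q + (1 + (c:ℝ))/(N:ℝ)) * N = N*Q + (1 + (c:ℝ)) := by
      field_simp
    rw [hexp]
    have hG : (#((range (N+1)).filter (· ∈ A)) : ℝ) ≤ (((N+1)/M + 1 : ℕ) : ℝ) * (c:ℝ) := by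
      exact_mod_cast le_trans (card_le_card (hsub N)) (hup (N+1))
    have hdivle : (((N+1)/M : ℕ) : ℝ) ≤ ((N:ℝ)+1)/(M:ℝ) := by
      have h := Nat.cast_div_le (α := ℝ) (m := N+1) (n := M)
      push_cast at h
      exact h
    have hc0 : (0:ℝ) ≤ c := Nat.cast_nonneg c
    calc (#((range (N+1)).filter (· ∈ A)) : ℝ)
        ≤ (((N+1)/M + 1 : ℕ) : ℝ) * (c:ℝ) := hG
      _ ≤ (((N:ℝ)+1)/(M:ℝ) + 1) * c := by
          apply mul_le_mul_of_nonneg_right ?_ hc0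
          push_cast
          linarith [hdivle]
      _ = ((N:ℝ)+1) * (Q) + c := by
          rw [hQeq]
          field_simp
      _ ≤ N*Q + (1 + (c:ℝ)) := by nlinarith [hQ1, hQ0]
  have hLHS : Tendsto (fun N : ℕ => Q + (1 + (c:ℝ))/(N:ℝ)) atTop (𝓝 (Q + 0)) :=
    tendsto_const_nhds.add (Tendsto.div_atTop tendsto_const_nhds tendsto_natCast_atTop_atTop)
  have hfin := le_of_tendsto_of_tendsto hDen hLHS
    (eventually_atTop.mpr ⟨1, fun N hN => hmain N hN⟩)
  have hQimg : Q = ∏ p ∈ F, (1 - (((p:ℕ):ℝ)-1)/((p:ℕ):ℝ)^3) := by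
    rw [hQdef, hF'def]
    exact Finset.prod_image (fun x _ y _ h => Subtype.ext h)
  rw [← hQimg]
  linarith [hfin]


lemma part1 (S : Set ℕ) (h1 : 1 ∈ S) (h2 : 2 ∈ S) (d : ℝ)
    (hD : HasDensity {N | IsExpSNumber S N} d) :
    (∏' p : Nat.Primes, (1 - 1 / ((p:ℕ) : ℝ) ^ 3)) ≤ d := by
  have hb : ∀ p : Nat.Primes, (0:ℝ) ≤ 1 - 1/((p:ℕ):ℝ)^3 ∧ (1 - 1/((p:ℕ):ℝ)^3) ≤ 1 := by
    intro p
    have hp1 : (1:ℝ) ≤ ((p:ℕ):ℝ) := by exact_mod_cast p.2.one_lt.le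
    have h3 : (1:ℝ) ≤ ((p:ℕ):ℝ)^3 := one_le_pow₀ hp1
    have hle : 1/((p:ℕ):ℝ)^3 ≤ 1 := by rw [div_le_one (by linarith)]; exact h3
    have hge : 0 ≤ 1/((p:ℕ):ℝ)^3 := by positivity
    exact ⟨by linarith, by linarith⟩
  have hm : Multipliable (fun p : Nat.Primes => 1 - 1/((p:ℕ):ℝ)^3) :=
    multipliable_aux (fun p => (hb p).1) (fun p => (hb p).2)
  have htail := tendsto_tsum_compl_atTop_zero (fun p : Nat.Primes => 1/((p:ℕ):ℝ)^3)
  have hT : Tendsto (fun F : Finset Nat.Primes =>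
      (∏ p ∈ F, (1 - 1/((p:ℕ):ℝ)^3))
        - (∑' p : {x : Nat.Primes // x ∉ F}, 1/(((p:Nat.Primes):ℕ):ℝ)^3))
      atTop (𝓝 ((∏' p : Nat.Primes, (1 - 1/((p:ℕ):ℝ)^3)) - 0)) :=
    hm.hasProd.sub htail
  have hkey := le_of_tendsto' hT (fun F => key1 S h1 h2 d hD F)
  linarith [hkey]

lemma part2 (S : Set ℕ) (h2 : 2 ∉ S) (d : ℝ)
    (hD : HasDensity {N | IsExpSNumber S N} d) :
    d ≤ ∏' p : Nat.Primes, (1 - (((p:ℕ):ℝ) - 1) / ((p:ℕ):ℝ) ^ 3) := by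
  have hb : ∀ p : Nat.Primes, (0:ℝ) ≤ 1 - (((p:ℕ):ℝ)-1)/((p:ℕ):ℝ)^3
      ∧ (1 - (((p:ℕ):ℝ)-1)/((p:ℕ):ℝ)^3) ≤ 1 := by
    intro p
    have hp1 : (1:ℝ) ≤ ((p:ℕ):ℝ) := by exact_mod_cast p.2.one_lt.le
    have h3 : (1:ℝ) ≤ ((p:ℕ):ℝ)^3 := one_le_pow₀ hp1
    have hp3 : ((p:ℕ):ℝ) ≤ ((p:ℕ):ℝ)^3 := le_self_pow₀ (by linarith) (by norm_num)
    have hle : (((p:ℕ):ℝ)-1)/((p:ℕ):ℝ)^3 ≤ 1 := by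
      rw [div_le_one (by linarith)]; linarith
    have hge : 0 ≤ (((p:ℕ):ℝ)-1)/((p:ℕ):ℝ)^3 := div_nonneg (by linarith) (by linarith)
    exact ⟨by linarith, by linarith⟩
  have hm : Multipliable (fun p : Nat.Primes => 1 - (((p:ℕ):ℝ)-1)/((p:ℕ):ℝ)^3) :=
    multipliable_aux (fun p => (hb p).1) (fun p => (hb p).2)
  exact ge_of_tendsto' hm.hasProd (fun F => key2 S h2 d hD F)

end ExpSAux

theorem stmt_18 :
    (∀ S : Set ℕ, 1 ∈ S → 2 ∈ S → ∀ d : ℝ,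
      HasDensity {N : ℕ | IsExpSNumber S N} d →
        (∏' p : Nat.Primes, (1 - 1 / (p : ℝ) ^ 3)) ≤ d) ∧
    (∀ S : Set ℕ, 1 ∈ S → 2 ∉ S → ∀ d : ℝ,
      HasDensity {N : ℕ | IsExpSNumber S N} d →
        d ≤ ∏' p : Nat.Primes, (1 - ((p : ℝ) - 1) / (p : ℝ) ^ 3)) ∧
    (∀ S : Set ℕ, 1 ∈ S → ∀ d : ℝ,
      HasDensity {N : ℕ | IsExpSNumber S N} d →
        d ∉ Set.Ioo (∏' p : Nat.Primes, (1 - ((p : ℝ) - 1) / (p : ℝ) ^ 3))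
                    (∏' p : Nat.Primes, (1 - 1 / (p : ℝ) ^ 3))) := by
  refine ⟨fun S h1 h2 d hD => ExpSAux.part1 S h1 h2 d hD,
    fun S h1 h2 d hD => ExpSAux.part2 S h2 d hD, ?_⟩
  intro S h1 d hD hIoo
  obtain ⟨hlt1, hlt2⟩ := hIoo
  by_cases h2 : 2 ∈ S
  · exact absurd (ExpSAux.part1 S h1 h2 d hD) (not_le.mpr hlt2)
  · exact absurd (ExpSAux.part2 S h2 d hD) (not_le.mpr hlt1)
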